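/- Let S be a finite set of m ≥ 2 points in a real inner product space with centroid c, and let x ∈ S. Then ∑_{y ∈ S \ {x}} ‖y − c'‖² = ∑_{y ∈ S} ‖y − c‖² − (m/(m−1)) ‖x − c‖², where c' is the centroid of S \ {x}. -/

import Mathlib

variable {E : Type*} [NormedAddCommGroup E] [InnerProductSpace ℝ E]

/-- The centroid (arithmetic mean) of a finite set of points. -/
noncomputable def centroid (S : Finset E) : E :=
  (S.card : ℝ)⁻¹ • ∑ y ∈ S, y

lemma sum_eq_card_smul_centroid (T : Finset E) (hT : T.Nonempty) :
    ∑ y ∈ T, y = (T.card : ℝ) • centroid T := by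
  rw [centroid, smul_inv_smul₀]
  exact_mod_cast Nat.cast_ne_zero.mpr (Finset.card_ne_zero_of_mem hT.choose_spec)

/-- Parallel axis theorem. -/
lemma parallel_axis (T : Finset E) (hT : T.Nonempty) (p : E) :
    ∑ y ∈ T, ‖y - centroid T‖ ^ 2 =
      ∑ y ∈ T, ‖y - p‖ ^ 2 - (T.card : ℝ) * ‖p - centroid T‖ ^ 2 := by
  set c := centroid T with hc
  have hsum : ∑ y ∈ T, y = (T.card : ℝ) • c := sum_eq_card_smul_centroid T hT
  have key : ∀ y ∈ T, ‖y - c‖ ^ 2 =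
      ‖y - p‖ ^ 2 - 2 * inner ℝ (y - p) (c - p) + ‖c - p‖ ^ 2 := by
    intro y _
    have : y - c = (y - p) - (c - p) := by abel
    rw [this, norm_sub_sq_real]
  rw [Finset.sum_congr rfl key]
  have hinner : ∑ y ∈ T, inner ℝ (y - p) (c - p) = (T.card : ℝ) * ‖c - p‖ ^ 2 := by
    rw [← sum_inner]
    have : ∑ y ∈ T, (y - p) = (T.card : ℝ) • (c - p) := by
      rw [Finset.sum_sub_distrib, hsum, Finset.sum_const, smul_sub]
      simp [← Nat.cast_smul_eq_nsmul ℝ]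
    rw [this, real_inner_smul_left, real_inner_self_eq_norm_sq]
  rw [Finset.sum_add_distrib, Finset.sum_sub_distrib, ← Finset.mul_sum, hinner,
    Finset.sum_const, nsmul_eq_mul, norm_sub_rev p c]
  ring

/-- Removing a point `x` from a cluster `S` of `m ≥ 2` points with centroid `c`
decreases the squared-Euclidean cluster cost by exactly `(m/(m−1))‖x − c‖²`. -/
theorem cost_erase [DecidableEq E]
    (S : Finset E) (m : ℕ) (hm : S.card = m) (hm' : 2 ≤ m) (x : E) (hx : x ∈ S) :
    ∑ y ∈ S.erase x, ‖y - centroid (S.erase x)‖ ^ 2 =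
      ∑ y ∈ S, ‖y - centroid S‖ ^ 2 -
        (m : ℝ) / ((m : ℝ) - 1) * ‖x - centroid S‖ ^ 2 := by
  have hcard : (S.erase x).card = m - 1 := by rw [Finset.card_erase_of_mem hx, hm]
  have hm1 : (1 : ℕ) ≤ m := le_trans (by norm_num) hm'
  have hmr : ((m : ℝ) - 1) ≠ 0 := by
    have : (2 : ℝ) ≤ (m : ℝ) := by exact_mod_cast hm'
    linarith
  have hne : (S.erase x).Nonempty := by
    rw [← Finset.card_pos, hcard]; omega
  set c := centroid S with hc
  set c' := centroid (S.erase x) with hc'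
  -- relation between centroids
  have hsumS : ∑ y ∈ S, y = (m : ℝ) • c := by
    rw [← hm]; exact sum_eq_card_smul_centroid S ⟨x, hx⟩
  have hsumE : ∑ y ∈ S.erase x, y = ((m : ℝ) - 1) • c' := by
    have := sum_eq_card_smul_centroid (S.erase x) hne
    rw [hcard] at this
    rw [this]
    congr 1
    push_cast [Nat.cast_sub hm1]
    ring
  have hsplit : ∑ y ∈ S, y = x + ∑ y ∈ S.erase x, y :=
    (Finset.add_sum_erase S id hx).symm
  have hrel : ((m : ℝ) - 1) • c' = (m : ℝ) • c - x := by
    rw [← hsumE, ← sub_eq_iff_eq_add'.mpr hsplit, hsumS]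
  have hdiff : c - c' = ((m : ℝ) - 1)⁻¹ • (x - c) := by
    have h2 : ((m : ℝ) - 1) • (c - c') = x - c := by
      rw [smul_sub, hrel]
      rw [sub_smul, one_smul]
      abel
    rw [← h2, inv_smul_smul₀ hmr]
  -- parallel axis on erase with p = c
  have hpa := parallel_axis (S.erase x) hne c
  rw [hcard] at hpa
  have hsum_erase : ∑ y ∈ S.erase x, ‖y - c‖ ^ 2 =
      ∑ y ∈ S, ‖y - c‖ ^ 2 - ‖x - c‖ ^ 2 := by
    rw [← Finset.add_sum_erase S (fun y => ‖y - c‖ ^ 2) hx]; ring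
  have hnorm : ‖c - c'‖ ^ 2 = (((m : ℝ) - 1)⁻¹) ^ 2 * ‖x - c‖ ^ 2 := by
    rw [hdiff, norm_smul, mul_pow]
    congr 1
    rw [Real.norm_eq_abs, sq_abs]
  rw [hpa, hsum_erase, hnorm]
  have hmn : ((m - 1 : ℕ) : ℝ) = (m : ℝ) - 1 := by push_cast [Nat.cast_sub hm1]; ring
  rw [hmn]
  field_simp
  ring
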